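/- Let h : ℝ → ℝ be a continuously differentiable function with support contained in the open interval (0,1) and ∫ h(ω)² dω = 1. For each n ≥ 1 define g_n(ω) = n^{-1/2} h((ω − n²)/n) (so g_n is supported in (n², n² + n)). Then: (i) ∫ g_n(ω)² dω = 1 for all n; (ii) ∫ g_n'(ω)² dω → 0 as n → ∞; (iii) m_n := ∫ log(ω) g_n(ω)² dω → ∞ as n → ∞; and (iv) ∫ (log(ω) − m_n)² g_n(ω)² dω → 0 as n → ∞. -/

import Mathlib

open MeasureTheory Filter

/-- The asymptotic uncertainty minimizers of the 1D wavelet transform: the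
windows `g_n(ω) = n^{-1/2} h((ω − n²)/n)` have unit norm, vanishing derivative
energy, mean log-frequency tending to infinity and log-frequency variance
tending to zero. -/
theorem stmt7 (h : ℝ → ℝ) (hC1 : ContDiff ℝ 1 h)
    (hsupp : Function.support h ⊆ Set.Ioo (0 : ℝ) 1)
    (hnorm : ∫ ω : ℝ, h ω ^ 2 = 1)
    (g : ℕ → ℝ → ℝ)
    (hg : ∀ (n : ℕ) (ω : ℝ),
      g n ω = (n : ℝ) ^ (-(1 : ℝ) / 2) * h ((ω - (n : ℝ) ^ 2) / n))
    (m : ℕ → ℝ)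
    (hm : ∀ n : ℕ, m n = ∫ ω : ℝ, Real.log ω * g n ω ^ 2) :
    (∀ n : ℕ, 1 ≤ n → ∫ ω : ℝ, g n ω ^ 2 = 1) ∧
    Tendsto (fun n : ℕ => ∫ ω : ℝ, deriv (g n) ω ^ 2) atTop (nhds 0) ∧
    Tendsto m atTop atTop ∧
    Tendsto (fun n : ℕ => ∫ ω : ℝ, (Real.log ω - m n) ^ 2 * g n ω ^ 2)
      atTop (nhds 0) := by
  have hcont : Continuous h := hC1.continuous
  have hzero : ∀ x : ℝ, x ∉ Set.Ioo (0:ℝ) 1 → h x = 0 := by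
    intro x hx
    by_contra hne
    exact hx (hsupp hne)
  -- integrability of `f * h²` for continuous `f`
  have int_mul : ∀ f : ℝ → ℝ, Continuous f →
      Integrable (fun u : ℝ => f u * h u ^ 2) := by
    intro f hf
    apply (hf.mul (hcont.pow 2)).integrable_of_hasCompactSupport
    apply HasCompactSupport.intro (isCompact_Icc (a := (0:ℝ)) (b := 1))
    intro x hx
    show f x * h x ^ 2 = 0
    rw [hzero x (fun hmem => hx (Set.Ioo_subset_Icc_self hmem))]
    ring
  have hsq_int : Integrable (fun u : ℝ => h u ^ 2) := by
    simpa using int_mul (fun _ => 1) continuous_const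
  -- the square of the normalizing constant
  have csq : ∀ n : ℕ, 1 ≤ n → ((n:ℝ) ^ (-(1:ℝ)/2)) ^ 2 = ((n:ℝ))⁻¹ := by
    intro n hn
    have hn0 : (0:ℝ) < n := by exact_mod_cast hn
    rw [← Real.rpow_natCast ((n:ℝ) ^ (-(1:ℝ)/2)) 2, ← Real.rpow_mul hn0.le]
    norm_num [Real.rpow_neg_one]
  -- change of variables
  have cv : ∀ n : ℕ, 1 ≤ n → ∀ F : ℝ → ℝ,
      (∫ ω : ℝ, F ((ω - (n:ℝ)^2)/n)) = n * ∫ u : ℝ, F u := by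
    intro n hn F
    have hn0 : (0:ℝ) < n := by exact_mod_cast hn
    calc (∫ ω : ℝ, F ((ω - (n:ℝ)^2)/n))
        = ∫ x : ℝ, F (x / n) :=
          integral_sub_right_eq_self (fun x => F (x / n)) ((n:ℝ)^2)
      _ = |(n:ℝ)| • ∫ u : ℝ, F u := Measure.integral_comp_div F n
      _ = n * ∫ u : ℝ, F u := by rw [abs_of_pos hn0, smul_eq_mul]
  -- continuity of the auxiliary log-factor
  have hLcont : ∀ n : ℕ, 1 ≤ n →
      Continuous (fun u : ℝ => Real.log (1 + max u 0 / n)) := by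
    intro n hn
    have hn0 : (0:ℝ) < n := by exact_mod_cast hn
    apply Continuous.log
    · exact continuous_const.add ((continuous_id.max continuous_const).div_const _)
    · intro u
      have h1 : (0:ℝ) ≤ max u 0 / n := div_nonneg (le_max_right u 0) hn0.le
      have : (0:ℝ) < 1 + max u 0 / n := by linarith
      exact ne_of_gt this
  have hLnonneg : ∀ n : ℕ, 1 ≤ n → ∀ v : ℝ,
      0 ≤ Real.log (1 + max v 0 / n) := by
    intro n hn v
    have hn0 : (0:ℝ) < n := by exact_mod_cast hn
    have h1 : (0:ℝ) ≤ max v 0 / n := div_nonneg (le_max_right v 0) hn0.le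
    exact Real.log_nonneg (by linarith)
  have hLle : ∀ n : ℕ, 1 ≤ n → ∀ v : ℝ, v ∈ Set.Ioo (0:ℝ) 1 →
      Real.log (1 + max v 0 / n) ≤ 1 / n := by
    intro n hn v hv
    have hn0 : (0:ℝ) < n := by exact_mod_cast hn
    have hmax : max v 0 = v := max_eq_left hv.1.le
    rw [hmax]
    have h1 : Real.log (1 + v/n) ≤ (1 + v/n) - 1 :=
      Real.log_le_sub_one_of_pos (add_pos one_pos (div_pos hv.1 hn0))
    have h2 : v / n ≤ 1 / n := by gcongr; exact hv.2.le
    linarith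
  -- key pointwise identity
  have key : ∀ n : ℕ, 1 ≤ n → ∀ v : ℝ,
      Real.log ((n:ℝ) * v + (n:ℝ)^2) * h v ^ 2
        = (2 * Real.log n + Real.log (1 + max v 0 / n)) * h v ^ 2 := by
    intro n hn v
    by_cases hv : h v = 0
    · rw [hv]; ring
    · have hmem := hsupp hv
      have hn0 : (0:ℝ) < n := by exact_mod_cast hn
      have hv0 : 0 < v := hmem.1
      have hmax : max v 0 = v := max_eq_left hv0.le
      rw [hmax]
      have harg : (n:ℝ) * v + (n:ℝ)^2 = (n:ℝ)^2 * (1 + v / n) := by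
        field_simp; ring
      rw [harg, Real.log_mul (by positivity)
        (ne_of_gt (add_pos one_pos (div_pos hv0 hn0))), Real.log_pow]
      push_cast
      ring
  -- part (i)
  have part1 : ∀ n : ℕ, 1 ≤ n → ∫ ω : ℝ, g n ω ^ 2 = 1 := by
    intro n hn
    have hn0 : (0:ℝ) < n := by exact_mod_cast hn
    calc ∫ ω : ℝ, g n ω ^ 2
        = ∫ ω : ℝ, ((n:ℝ) ^ (-(1:ℝ)/2) * h ((ω - (n:ℝ)^2)/n)) ^ 2 := by
          simp only [hg]
      _ = n * ∫ u : ℝ, ((n:ℝ) ^ (-(1:ℝ)/2) * h u) ^ 2 :=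
          cv n hn (fun u => ((n:ℝ) ^ (-(1:ℝ)/2) * h u) ^ 2)
      _ = n * ∫ u : ℝ, (n:ℝ)⁻¹ * h u ^ 2 := by
          simp only [mul_pow, csq n hn]
      _ = n * ((n:ℝ)⁻¹ * ∫ u : ℝ, h u ^ 2) := by rw [integral_const_mul]
      _ = 1 := by rw [hnorm]; field_simp
  -- part (ii)
  have hd : Differentiable ℝ h := hC1.differentiable one_ne_zero
  have part2calc : ∀ n : ℕ, 1 ≤ n →
      (∫ ω : ℝ, deriv (g n) ω ^ 2)
        = ((n:ℝ)^2)⁻¹ * ((n:ℝ)⁻¹ * ∫ u : ℝ, deriv h u ^ 2) * n := by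
    intro n hn
    have hn0 : (0:ℝ) < n := by exact_mod_cast hn
    have hderiv : ∀ ω : ℝ, deriv (g n) ω
        = (n:ℝ) ^ (-(1:ℝ)/2) * ((n:ℝ)⁻¹ * deriv h ((ω - (n:ℝ)^2)/n)) := by
      intro ω
      have h1 : HasDerivAt (fun ω : ℝ => (ω - (n:ℝ)^2)/n) ((n:ℝ)⁻¹) ω := by
        simpa using ((hasDerivAt_id ω).sub_const ((n:ℝ)^2)).div_const (n:ℝ)
      have h2 : HasDerivAt h (deriv h ((ω - (n:ℝ)^2)/n)) ((ω - (n:ℝ)^2)/n) :=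
        (hd _).hasDerivAt
      have h3 := (h2.comp ω h1).const_mul ((n:ℝ) ^ (-(1:ℝ)/2))
      have hfun : g n = fun ω : ℝ => (n:ℝ) ^ (-(1:ℝ)/2) * h ((ω - (n:ℝ)^2)/n) :=
        funext (hg n)
      rw [hfun]
      exact h3.deriv.trans (by ring)
    calc ∫ ω : ℝ, deriv (g n) ω ^ 2
        = ∫ ω : ℝ, ((n:ℝ) ^ (-(1:ℝ)/2) * ((n:ℝ)⁻¹ * deriv h ((ω - (n:ℝ)^2)/n))) ^ 2 := by
          simp only [hderiv]
      _ = n * ∫ u : ℝ, ((n:ℝ) ^ (-(1:ℝ)/2) * ((n:ℝ)⁻¹ * deriv h u)) ^ 2 :=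
          cv n hn (fun u => ((n:ℝ) ^ (-(1:ℝ)/2) * ((n:ℝ)⁻¹ * deriv h u)) ^ 2)
      _ = n * ∫ u : ℝ, (n:ℝ)⁻¹ * ((n:ℝ)⁻¹ ^ 2 * deriv h u ^ 2) := by
          simp only [mul_pow, csq n hn]
      _ = n * ((n:ℝ)⁻¹ * ((n:ℝ)⁻¹ ^ 2 * ∫ u : ℝ, deriv h u ^ 2)) := by
          rw [integral_const_mul]
          congr 1
          rw [integral_const_mul]
      _ = ((n:ℝ)^2)⁻¹ * ((n:ℝ)⁻¹ * ∫ u : ℝ, deriv h u ^ 2) * n := by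
          field_simp
  have hinv2 : Tendsto (fun n : ℕ => ((n:ℝ)^2)⁻¹) atTop (nhds 0) := by
    apply Tendsto.inv_tendsto_atTop
    exact (tendsto_pow_atTop (by norm_num)).comp tendsto_natCast_atTop_atTop
  have part2 : Tendsto (fun n : ℕ => ∫ ω : ℝ, deriv (g n) ω ^ 2) atTop (nhds 0) := by
    have hinv3 : Tendsto (fun n : ℕ => ((n:ℝ)^2)⁻¹ * ∫ u : ℝ, deriv h u ^ 2)
        atTop (nhds 0) := by
      simpa using hinv2.mul_const (∫ u : ℝ, deriv h u ^ 2)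
    refine Tendsto.congr' ?_ hinv3
    filter_upwards [eventually_ge_atTop 1] with n hn
    have hn0 : (0:ℝ) < n := by exact_mod_cast hn
    rw [part2calc n hn]
    field_simp
  -- the mean
  have hmn : ∀ n : ℕ, 1 ≤ n →
      m n = 2 * Real.log n + ∫ v : ℝ, Real.log (1 + max v 0 / n) * h v ^ 2 := by
    intro n hn
    have hn0 : (0:ℝ) < n := by exact_mod_cast hn
    have step : m n = ∫ v : ℝ, Real.log ((n:ℝ) * v + (n:ℝ)^2) * h v ^ 2 := by
      rw [hm]
      calc ∫ ω : ℝ, Real.log ω * g n ω ^ 2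
          = ∫ ω : ℝ, Real.log ((n:ℝ) * ((ω - (n:ℝ)^2)/n) + (n:ℝ)^2)
              * ((n:ℝ) ^ (-(1:ℝ)/2) * h ((ω - (n:ℝ)^2)/n)) ^ 2 := by
            congr 1
            funext ω
            have harg : (n:ℝ) * ((ω - (n:ℝ)^2)/n) + (n:ℝ)^2 = ω := by
              field_simp; ring
            simp only [hg, harg]
        _ = n * ∫ v : ℝ, Real.log ((n:ℝ) * v + (n:ℝ)^2)
              * ((n:ℝ) ^ (-(1:ℝ)/2) * h v) ^ 2 :=
            cv n hn
              (fun v => Real.log ((n:ℝ) * v + (n:ℝ)^2) * ((n:ℝ) ^ (-(1:ℝ)/2) * h v) ^ 2)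
        _ = n * ∫ v : ℝ, (n:ℝ)⁻¹ * (Real.log ((n:ℝ) * v + (n:ℝ)^2) * h v ^ 2) := by
            simp only [mul_pow, csq n hn]
            congr 1
            refine integral_congr_ae (Eventually.of_forall fun v => ?_)
            ring
        _ = n * ((n:ℝ)⁻¹ * ∫ v : ℝ, Real.log ((n:ℝ) * v + (n:ℝ)^2) * h v ^ 2) := by
            rw [integral_const_mul]
        _ = ∫ v : ℝ, Real.log ((n:ℝ) * v + (n:ℝ)^2) * h v ^ 2 := by
            field_simp
    rw [step]
    calc ∫ v : ℝ, Real.log ((n:ℝ) * v + (n:ℝ)^2) * h v ^ 2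
        = ∫ v : ℝ, (2 * Real.log n + Real.log (1 + max v 0 / n)) * h v ^ 2 := by
          exact integral_congr_ae (Eventually.of_forall fun v => key n hn v)
      _ = ∫ v : ℝ, (2 * Real.log n * h v ^ 2
            + Real.log (1 + max v 0 / n) * h v ^ 2) := by
          refine integral_congr_ae (Eventually.of_forall fun v => ?_)
          ring
      _ = (∫ v : ℝ, 2 * Real.log n * h v ^ 2)
            + ∫ v : ℝ, Real.log (1 + max v 0 / n) * h v ^ 2 :=
          integral_add (hsq_int.const_mul _) (int_mul _ (hLcont n hn))
      _ = 2 * Real.log n + ∫ v : ℝ, Real.log (1 + max v 0 / n) * h v ^ 2 := by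
          rw [integral_const_mul, hnorm, mul_one]
  -- bounds on the correction term
  have hE0 : ∀ n : ℕ, 1 ≤ n →
      0 ≤ ∫ v : ℝ, Real.log (1 + max v 0 / n) * h v ^ 2 := by
    intro n hn
    apply integral_nonneg
    intro v
    exact mul_nonneg (hLnonneg n hn v) (sq_nonneg _)
  have hE1 : ∀ n : ℕ, 1 ≤ n →
      (∫ v : ℝ, Real.log (1 + max v 0 / n) * h v ^ 2) ≤ 1 / n := by
    intro n hn
    have hn0 : (0:ℝ) < n := by exact_mod_cast hn
    calc (∫ v : ℝ, Real.log (1 + max v 0 / n) * h v ^ 2)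
        ≤ ∫ v : ℝ, (1 / (n:ℝ)) * h v ^ 2 := by
          refine integral_mono (int_mul _ (hLcont n hn))
            (hsq_int.const_mul _) fun v => ?_
          by_cases hv : h v = 0
          · simp [hv]
          · exact mul_le_mul_of_nonneg_right (hLle n hn v (hsupp hv)) (sq_nonneg _)
      _ = 1 / n := by rw [integral_const_mul, hnorm, mul_one]
  -- part (iii)
  have part3 : Tendsto m atTop atTop := by
    have hlog2 : Tendsto (fun n : ℕ => 2 * Real.log n) atTop atTop :=
      (Real.tendsto_log_atTop.comp tendsto_natCast_atTop_atTop).const_mul_atTop two_pos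
    refine tendsto_atTop_mono' atTop ?_ hlog2
    filter_upwards [eventually_ge_atTop 1] with n hn
    rw [hmn n hn]
    linarith [hE0 n hn]
  -- part (iv)
  have part4calc : ∀ n : ℕ, 1 ≤ n →
      (∫ ω : ℝ, (Real.log ω - m n) ^ 2 * g n ω ^ 2)
        = ∫ v : ℝ, (2 * Real.log n + Real.log (1 + max v 0 / n) - m n) ^ 2
            * h v ^ 2 := by
    intro n hn
    have hn0 : (0:ℝ) < n := by exact_mod_cast hn
    calc ∫ ω : ℝ, (Real.log ω - m n) ^ 2 * g n ω ^ 2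
        = ∫ ω : ℝ, (Real.log ((n:ℝ) * ((ω - (n:ℝ)^2)/n) + (n:ℝ)^2) - m n) ^ 2
            * ((n:ℝ) ^ (-(1:ℝ)/2) * h ((ω - (n:ℝ)^2)/n)) ^ 2 := by
          refine integral_congr_ae (Eventually.of_forall fun ω => ?_)
          have harg : (n:ℝ) * ((ω - (n:ℝ)^2)/n) + (n:ℝ)^2 = ω := by
            field_simp; ring
          simp only [hg, harg]
      _ = n * ∫ v : ℝ, (Real.log ((n:ℝ) * v + (n:ℝ)^2) - m n) ^ 2
            * ((n:ℝ) ^ (-(1:ℝ)/2) * h v) ^ 2 :=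
          cv n hn
            (fun v => (Real.log ((n:ℝ) * v + (n:ℝ)^2) - m n) ^ 2
              * ((n:ℝ) ^ (-(1:ℝ)/2) * h v) ^ 2)
      _ = n * ∫ v : ℝ, (n:ℝ)⁻¹
            * ((Real.log ((n:ℝ) * v + (n:ℝ)^2) - m n) ^ 2 * h v ^ 2) := by
          simp only [mul_pow, csq n hn]
          congr 1
          refine integral_congr_ae (Eventually.of_forall fun v => ?_)
          ring
      _ = n * ((n:ℝ)⁻¹
            * ∫ v : ℝ, (Real.log ((n:ℝ) * v + (n:ℝ)^2) - m n) ^ 2 * h v ^ 2) := by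
          rw [integral_const_mul]
      _ = ∫ v : ℝ, (Real.log ((n:ℝ) * v + (n:ℝ)^2) - m n) ^ 2 * h v ^ 2 := by
          field_simp
      _ = ∫ v : ℝ, (2 * Real.log n + Real.log (1 + max v 0 / n) - m n) ^ 2
            * h v ^ 2 := by
          congr 1
          funext v
          by_cases hv : h v = 0
          · rw [hv]; ring
          · have hmem := hsupp hv
            have hmax : max v 0 = v := max_eq_left hmem.1.le
            have harg : (n:ℝ) * v + (n:ℝ)^2 = (n:ℝ)^2 * (1 + v / n) := by
              field_simp; ring
            rw [hmax, harg, Real.log_mul (by positivity)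
              (ne_of_gt (add_pos one_pos (div_pos hmem.1 hn0))), Real.log_pow]
            push_cast
            ring
  have hbound : ∀ n : ℕ, 1 ≤ n →
      (∫ ω : ℝ, (Real.log ω - m n) ^ 2 * g n ω ^ 2) ≤ (1 / (n:ℝ)) ^ 2 := by
    intro n hn
    have hn0 : (0:ℝ) < n := by exact_mod_cast hn
    have hEeq : m n - 2 * Real.log n
        = ∫ v : ℝ, Real.log (1 + max v 0 / n) * h v ^ 2 := by
      rw [hmn n hn]; ring
    have hEl : 0 ≤ m n - 2 * Real.log n := by rw [hEeq]; exact hE0 n hn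
    have hEu : m n - 2 * Real.log n ≤ 1 / n := by rw [hEeq]; exact hE1 n hn
    rw [part4calc n hn]
    calc (∫ v : ℝ, (2 * Real.log n + Real.log (1 + max v 0 / n) - m n) ^ 2
            * h v ^ 2)
        ≤ ∫ v : ℝ, (1 / (n:ℝ)) ^ 2 * h v ^ 2 := by
          refine integral_mono
            (int_mul _ (((continuous_const.add (hLcont n hn)).sub continuous_const).pow 2))
            (hsq_int.const_mul _) fun v => ?_
          by_cases hv : h v = 0
          · simp [hv]
          · have hmem := hsupp hv
            have hL0 := hLnonneg n hn v
            have hL1 := hLle n hn v hmem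
            have hsq : (2 * Real.log n + Real.log (1 + max v 0 / n) - m n) ^ 2
                ≤ (1 / (n:ℝ)) ^ 2 := by
              apply sq_le_sq' <;> linarith
            exact mul_le_mul_of_nonneg_right hsq (sq_nonneg _)
      _ = (1 / (n:ℝ)) ^ 2 := by rw [integral_const_mul, hnorm, mul_one]
  have part4 : Tendsto (fun n : ℕ => ∫ ω : ℝ, (Real.log ω - m n) ^ 2 * g n ω ^ 2)
      atTop (nhds 0) := by
    have hub : Tendsto (fun n : ℕ => (1 / (n:ℝ)) ^ 2) atTop (nhds 0) := by
      have : Tendsto (fun n : ℕ => (1:ℝ) / n) atTop (nhds 0) :=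
        tendsto_one_div_atTop_nhds_zero_nat
      simpa using this.pow 2
    refine tendsto_of_tendsto_of_tendsto_of_le_of_le' tendsto_const_nhds hub ?_ ?_
    · filter_upwards with n
      exact integral_nonneg fun ω => mul_nonneg (sq_nonneg _) (sq_nonneg _)
    · filter_upwards [eventually_ge_atTop 1] with n hn
      exact hbound n hn
  exact ⟨part1, part2, part3, part4⟩
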